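/- At the point (r,s,t) = (1/8, 0, 3/8) all three auxiliary functions vanish: σ(1/8, 0, 3/8) = 0, τ(1/8, 0, 3/8) = 0 and ρ(1/8, 0, 3/8) = 0. -/
import Mathlib


noncomputable section
open Complex

/-- `σ(r,s,t) = (1/4)(e^{2πir} + e^{2πi(s−r)} + e^{−2πit} + e^{2πi(t−s)})`. -/
def σf (r s t : ℝ) : ℂ := (1/4) * (Complex.exp (2 * Real.pi * Complex.I * r)
  + Complex.exp (2 * Real.pi * Complex.I * (s - r))
  + Complex.exp (-(2 * Real.pi * Complex.I * t))
  + Complex.exp (2 * Real.pi * Complex.I * (t - s)))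

/-- `τ(r,s,t) = (1/6)(e^{−2πis} + e^{2πis} + e^{2πi(r−t)} + e^{2πi(s−r−t)} + e^{2πi(t−r)} + e^{2πi(r−s+t)})`. -/
def τf (r s t : ℝ) : ℂ := (1/6) * (Complex.exp (-(2 * Real.pi * Complex.I * s))
  + Complex.exp (2 * Real.pi * Complex.I * s)
  + Complex.exp (2 * Real.pi * Complex.I * (r - t))
  + Complex.exp (2 * Real.pi * Complex.I * (s - r - t))
  + Complex.exp (2 * Real.pi * Complex.I * (t - r))
  + Complex.exp (2 * Real.pi * Complex.I * (r - s + t)))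

/-- `ρ(r,s,t) = (1/4)(e^{−2πir} + e^{2πi(r−s)} + e^{2πi(s−t)} + e^{2πit})`. -/
def ρf (r s t : ℝ) : ℂ := (1/4) * (Complex.exp (-(2 * Real.pi * Complex.I * r))
  + Complex.exp (2 * Real.pi * Complex.I * (r - s))
  + Complex.exp (2 * Real.pi * Complex.I * (s - t))
  + Complex.exp (2 * Real.pi * Complex.I * t))

private lemma key (x : ℂ) : Complex.exp (x + Real.pi * Complex.I) = -Complex.exp x := by
  rw [Complex.exp_add, Complex.exp_pi_mul_I]; ring

/-- at `(r,s,t) = (1/8, 0, 3/8)` all three auxiliary functions vanish. -/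
theorem sigma_tau_rho_vanish :
    σf (1/8) 0 (3/8) = 0 ∧ τf (1/8) 0 (3/8) = 0 ∧ ρf (1/8) 0 (3/8) = 0 := by
  have hm : Complex.exp (-(Real.pi * Complex.I)) = -1 := by
    rw [Complex.exp_neg, Complex.exp_pi_mul_I]; norm_num
  refine ⟨?_, ?_, ?_⟩
  · unfold σf
    rw [show (2 * (Real.pi:ℂ) * Complex.I * ((1/8 : ℝ):ℂ))
        = -(2 * (Real.pi:ℂ) * Complex.I * ((3/8 : ℝ):ℂ)) + Real.pi * Complex.I by
          push_cast; ring,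
      show (2 * (Real.pi:ℂ) * Complex.I * (((3/8 : ℝ):ℂ) - ((0:ℝ):ℂ)))
        = 2 * (Real.pi:ℂ) * Complex.I * (((0:ℝ):ℂ) - ((1/8 : ℝ):ℂ)) + Real.pi * Complex.I by
          push_cast; ring,
      key, key]
    ring
  · unfold τf
    rw [show (-(2 * (Real.pi:ℂ) * Complex.I * ((0:ℝ):ℂ))) = 0 by push_cast; ring,
      show (2 * (Real.pi:ℂ) * Complex.I * ((0:ℝ):ℂ)) = 0 by push_cast; ring,
      show (2 * (Real.pi:ℂ) * Complex.I * (((3/8:ℝ):ℂ) - ((1/8:ℝ):ℂ)))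
        = 2 * (Real.pi:ℂ) * Complex.I * (((1/8:ℝ):ℂ) - ((3/8:ℝ):ℂ)) + Real.pi * Complex.I by
          push_cast; ring,
      show (2 * (Real.pi:ℂ) * Complex.I * (((0:ℝ):ℂ) - ((1/8:ℝ):ℂ) - ((3/8:ℝ):ℂ)))
        = -((Real.pi:ℂ) * Complex.I) by push_cast; ring,
      show (2 * (Real.pi:ℂ) * Complex.I * (((1/8:ℝ):ℂ) - ((0:ℝ):ℂ) + ((3/8:ℝ):ℂ)))
        = (Real.pi:ℂ) * Complex.I by push_cast; ring,
      key, hm, Complex.exp_pi_mul_I, Complex.exp_zero]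
    ring
  · unfold ρf
    rw [show (2 * (Real.pi:ℂ) * Complex.I * (((1/8 : ℝ):ℂ) - ((0:ℝ):ℂ)))
        = 2 * (Real.pi:ℂ) * Complex.I * (((0:ℝ):ℂ) - ((3/8 : ℝ):ℂ)) + Real.pi * Complex.I by
          push_cast; ring,
      show (2 * (Real.pi:ℂ) * Complex.I * ((3/8 : ℝ):ℂ))
        = -(2 * (Real.pi:ℂ) * Complex.I * ((1/8 : ℝ):ℂ)) + Real.pi * Complex.I by
          push_cast; ring,
      key, key]
    ring
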